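/- With K(t) = log(Σᵢ wᵢ e^{aᵢt}) as above and μ_n = maxᵢ |aᵢ - ā(0)| where ā(0) = Σᵢ (wᵢ/Σⱼwⱼ)aᵢ, the remainder v(t) = K(t) - K(0) - ā(0)t - (1/2)K''(0)t² satisfies |v(t)| ≤ (4/3) μ_n³ |t|³. -/

import Mathlib

open Real Finset

private lemma mono_aux (φ φ' : ℝ → ℝ) (hφ : ∀ s, HasDerivAt φ (φ' s) s)
    (T : ℝ) (hT : 0 ≤ T) (hpos : ∀ s, 0 ≤ s → s ≤ T → 0 ≤ φ' s) :
    φ 0 ≤ φ T := by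
  have hmono : MonotoneOn φ (Set.Icc 0 T) := by
    apply monotoneOn_of_deriv_nonneg (convex_Icc 0 T)
    · exact fun s _ => (hφ s).differentiableAt.continuousAt.continuousWithinAt
    · exact fun s _ => (hφ s).differentiableAt.differentiableWithinAt
    · intro x hx
      rw [interior_Icc] at hx
      rw [(hφ x).deriv]
      exact hpos x hx.1.le hx.2.le
  exact hmono (Set.left_mem_Icc.2 hT) (Set.right_mem_Icc.2 hT) hT

private lemma poly_bound (f f' : ℝ → ℝ) (hf : ∀ s, HasDerivAt f (f' s) s)
    (h0 : f 0 = 0) (C : ℝ) (k : ℕ) (T : ℝ) (hT : 0 ≤ T)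
    (hb : ∀ s, 0 ≤ s → s ≤ T → |f' s| ≤ C * s ^ k) :
    |f T| ≤ C * T ^ (k + 1) / (k + 1) := by
  have hkpos : (0:ℝ) < (k:ℝ) + 1 := by positivity
  have hpow : ∀ s : ℝ, HasDerivAt (fun x : ℝ => C * x ^ (k+1) / ((k:ℝ)+1)) (C * s ^ k) s := by
    intro s
    have h := ((hasDerivAt_pow (k+1) s).const_mul C).div_const ((k:ℝ)+1)
    refine h.congr_deriv ?_
    push_cast
    field_simp
  have hcast : (((k:ℝ)+1)) = ((k+1 : ℕ) : ℝ) := by push_cast; ring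
  rw [abs_le]
  constructor
  · have h := mono_aux (fun x => C * x ^ (k+1)/((k:ℝ)+1) + f x) (fun x => C * x^k + f' x)
      (fun s => (hpow s).add (hf s)) T hT
      (fun s hs hsT => by
        have h1 := (abs_le.1 (hb s hs hsT)).1
        show 0 ≤ C * s ^ k + f' s
        linarith)
    simp only [h0] at h
    rw [hcast] at h
    simp at h ⊢
    linarith
  · have h := mono_aux (fun x => C * x ^ (k+1)/((k:ℝ)+1) - f x) (fun x => C * x^k - f' x)
      (fun s => (hpow s).sub (hf s)) T hT
      (fun s hs hsT => by
        have h1 := (abs_le.1 (hb s hs hsT)).2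
        show 0 ≤ C * s ^ k - f' s
        linarith)
    simp only [h0] at h
    rw [hcast] at h
    simp at h ⊢
    linarith

private lemma third_order_bound (g g1 g2 g3 : ℝ → ℝ)
    (h1 : ∀ s, HasDerivAt g (g1 s) s) (h2 : ∀ s, HasDerivAt g1 (g2 s) s)
    (h3 : ∀ s, HasDerivAt g2 (g3 s) s)
    (hg0 : g 0 = 0) (hg10 : g1 0 = 0) (hg20 : g2 0 = 0)
    (C : ℝ) (hC : ∀ s, |g3 s| ≤ C) (t : ℝ) :
    |g t| ≤ C * |t| ^ 3 / 6 := by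
  have key : ∀ (G G1 G2 G3 : ℝ → ℝ),
      (∀ s, HasDerivAt G (G1 s) s) → (∀ s, HasDerivAt G1 (G2 s) s) →
      (∀ s, HasDerivAt G2 (G3 s) s) →
      G 0 = 0 → G1 0 = 0 → G2 0 = 0 → (∀ s, |G3 s| ≤ C) →
      ∀ T, 0 ≤ T → |G T| ≤ C * T ^ 3 / 6 := by
    intro G G1 G2 G3 H1 H2 H3 H0 H10 H20 HC T hT
    have b2 : ∀ s, 0 ≤ s → s ≤ T → |G2 s| ≤ C * s ^ 1 := by
      intro s hs hsT
      have h := poly_bound G2 G3 H3 H20 C 0 s hs (fun u hu huT => by simpa using HC u)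
      simpa using h
    have b1 : ∀ s, 0 ≤ s → s ≤ T → |G1 s| ≤ (C/2) * s ^ 2 := by
      intro s hs hsT
      have h := poly_bound G1 G2 H2 H10 C 1 s hs (fun u hu hus => b2 u hu (hus.trans hsT))
      norm_num at h
      rw [show (C/2) * s ^ 2 = C * s ^ 2 / 2 from by ring]
      exact h
    have h := poly_bound G G1 H1 H0 (C/2) 2 T hT b1
    norm_num at h
    rw [show C * T ^ 3 / 6 = C / 2 * T ^ 3 / 3 from by ring]
    exact h
  rcases le_total 0 t with ht | ht
  · simpa [abs_of_nonneg ht] using key g g1 g2 g3 h1 h2 h3 hg0 hg10 hg20 hC t ht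
  · have hd1 : ∀ s : ℝ, HasDerivAt (fun s => g (-s)) (-g1 (-s)) s := by
      intro s
      have h := (h1 (-s)).comp s (hasDerivAt_neg s)
      simpa [Function.comp_def, mul_comm] using h
    have hd2 : ∀ s : ℝ, HasDerivAt (fun s => -g1 (-s)) (g2 (-s)) s := by
      intro s
      have h := ((h2 (-s)).comp s (hasDerivAt_neg s)).neg
      simpa [Function.comp_def, mul_comm, Pi.neg_def] using h
    have hd3 : ∀ s : ℝ, HasDerivAt (fun s => g2 (-s)) (-g3 (-s)) s := by
      intro s
      have h := (h3 (-s)).comp s (hasDerivAt_neg s)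
      simpa [Function.comp_def, mul_comm] using h
    have hres := key (fun s => g (-s)) (fun s => -g1 (-s)) (fun s => g2 (-s)) (fun s => -g3 (-s))
      hd1 hd2 hd3 (by simpa using hg0) (by simp [hg10]) (by simpa using hg20)
      (fun s => by simpa using hC (-s)) (-t) (by linarith)
    simpa [abs_of_nonpos ht] using hres

/-- Lemma A2(ii), first bound, of Hjort–Pollard: the remainder
`v(t) = K(t) - K(0) - ā(0)t - ½K''(0)t²` of the log-partition function
satisfies `|v(t)| ≤ (4/3) μₙ³ |t|³`, where `μₙ = maxᵢ |aᵢ - ā(0)|`. -/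
theorem log_partition_remainder_bound {n : ℕ}
    (w a : Fin n → ℝ) (hw : ∀ i, 0 ≤ w i) (hw' : ∃ i, w i ≠ 0)
    (K : ℝ → ℝ) (hK : ∀ t, K t = log (∑ i, w i * exp (a i * t)))
    (v0 : Fin n → ℝ) (hv0 : ∀ i, v0 i = w i / ∑ j, w j)
    (abar0 : ℝ) (habar0 : abar0 = ∑ i, v0 i * a i)
    (K2 : ℝ) (hK2 : K2 = ∑ i, v0 i * (a i - abar0) ^ 2)
    (μn : ℝ) (hμn : IsGreatest (Set.range fun i => |a i - abar0|) μn) :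
    ∀ t : ℝ, |K t - K 0 - abar0 * t - (1/2) * K2 * t ^ 2|
        ≤ (4/3) * μn ^ 3 * |t| ^ 3 := by
  intro t
  obtain ⟨j, hj⟩ := hw'
  have hwj : 0 < w j := (hw j).lt_of_ne (Ne.symm hj)
  set W : ℝ := ∑ i, w i with hW
  have hWpos : 0 < W := Finset.sum_pos' (fun i _ => hw i) ⟨j, Finset.mem_univ j, hwj⟩
  set E : ℕ → ℝ → ℝ := fun k t => ∑ i, w i * a i ^ k * exp (a i * t) with hE
  have hE0pos : ∀ s, 0 < E 0 s := by
    intro s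
    rw [hE]
    refine Finset.sum_pos' (fun i _ => ?_) ⟨j, Finset.mem_univ j, ?_⟩
    · exact mul_nonneg (mul_nonneg (hw i) (by rw [pow_zero]; exact zero_le_one)) (exp_pos _).le
    · rw [pow_zero, mul_one]
      exact mul_pos hwj (exp_pos _)
  have hne : ∀ s, E 0 s ≠ 0 := fun s => (hE0pos s).ne'
  have hEd : ∀ (k : ℕ) (s : ℝ), HasDerivAt (E k) (E (k+1) s) s := by
    intro k s
    have h : ∀ i : Fin n, HasDerivAt (fun u => w i * a i ^ k * exp (a i * u))
        (w i * a i ^ (k+1) * exp (a i * s)) s := by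
      intro i
      have h := (((hasDerivAt_id s).const_mul (a i)).exp.const_mul (w i * a i ^ k))
      refine h.congr_deriv ?_
      simp only [id_eq]
      ring
    simpa [hE] using HasDerivAt.fun_sum (fun i _ => h i)
  -- K as log of E 0
  have hKfun : K = fun u => Real.log (E 0 u) := by
    funext u
    rw [hK u]
    simp [hE]
  have hKd : ∀ s, HasDerivAt K (E 1 s / E 0 s) s := by
    intro s
    rw [hKfun]
    exact (hEd 0 s).log (hne s)
  set m : ℝ → ℝ := fun s => E 1 s / E 0 s with hm
  have hmd : ∀ s, HasDerivAt m (E 2 s / E 0 s - m s ^ 2) s := by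
    intro s
    have h := (hEd 1 s).div (hEd 0 s) (hne s)
    rw [hm]
    refine h.congr_deriv ?_
    field_simp [hne s]
  set g3f : ℝ → ℝ := fun s => E 3 s / E 0 s - 3 * m s * (E 2 s / E 0 s) + 2 * m s ^ 3 with hg3f
  set g2f : ℝ → ℝ := fun s => E 2 s / E 0 s - m s ^ 2 - K2 with hg2f
  set g1f : ℝ → ℝ := fun s => m s - abar0 - K2 * s with hg1f
  set gf : ℝ → ℝ := fun s => K s - K 0 - abar0 * s - (1/2) * K2 * s ^ 2 with hgf
  have hg2d : ∀ s, HasDerivAt g2f (g3f s) s := by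
    intro s
    have h := (((hEd 2 s).div (hEd 0 s) (hne s)).sub ((hmd s).pow 2)).sub_const K2
    rw [hg2f, hg3f]
    refine h.congr_deriv ?_
    simp only [hm]
    field_simp [hne s]
    rw [show (2:ℕ) - 1 = 1 from rfl, pow_one]
    field_simp [hne s]
    ring
  have hg1d : ∀ s, HasDerivAt g1f (g2f s) s := by
    intro s
    have h := (((hmd s).sub_const abar0).sub ((hasDerivAt_id s).const_mul K2))
    rw [hg1f, hg2f]
    refine h.congr_deriv ?_
    ring
  have hgd : ∀ s, HasDerivAt gf (g1f s) s := by
    intro s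
    have h := (((hKd s).sub_const (K 0)).sub ((hasDerivAt_id s).const_mul abar0)).sub
      (((hasDerivAt_pow 2 s)).const_mul ((1/2) * K2))
    rw [hgf, hg1f]
    refine h.congr_deriv ?_
    simp only [hm]
    push_cast
    ring
  -- values at 0
  have hE00 : E 0 0 = W := by simp [hE, hW]
  have hE10 : E 1 0 = ∑ i, w i * a i := by simp [hE]
  have hE20 : E 2 0 = ∑ i, w i * a i ^ 2 := by simp [hE]
  have habar' : abar0 = (∑ i, w i * a i) / W := by
    rw [habar0, Finset.sum_div]
    exact Finset.sum_congr rfl fun i _ => by rw [hv0]; ring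
  have hm0 : m 0 = abar0 := by
    rw [hm]
    simp only [hE10, hE00]
    exact habar'.symm
  have hSA : ∑ i, w i * a i = abar0 * W := by
    rw [habar']
    field_simp
  have hK2' : K2 = (∑ i, w i * a i ^ 2) / W - abar0 ^ 2 := by
    rw [hK2]
    have h1 : ∀ i : Fin n, v0 i * (a i - abar0) ^ 2
        = (w i * a i ^ 2 - 2 * abar0 * (w i * a i) + abar0 ^ 2 * w i) / W := by
      intro i
      rw [hv0]
      ring
    rw [Finset.sum_congr rfl fun i _ => h1 i, ← Finset.sum_div]
    rw [Finset.sum_add_distrib, Finset.sum_sub_distrib, ← Finset.mul_sum, ← Finset.mul_sum,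
      hSA, ← hW]
    field_simp
    ring
  have hg00 : gf 0 = 0 := by rw [hgf]; simp
  have hg10 : g1f 0 = 0 := by rw [hg1f]; simp [hm0]
  have hg20 : g2f 0 = 0 := by
    rw [hg2f]
    simp only [hE20, hE00, hm0]
    rw [hK2']
    ring
  -- bounds
  have hμ_ub : ∀ i, |a i - abar0| ≤ μn := fun i => hμn.2 ⟨i, rfl⟩
  have hμ0 : 0 ≤ μn := by
    obtain ⟨i, hi⟩ := hμn.1
    exact hi ▸ abs_nonneg _
  have hwe : ∀ (i : Fin n) (s : ℝ), 0 ≤ w i * exp (a i * s) :=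
    fun i s => mul_nonneg (hw i) (exp_pos _).le
  have hE0sum : ∀ s, E 0 s = ∑ i, w i * exp (a i * s) := by
    intro s; rw [hE]; exact Finset.sum_congr rfl fun i _ => by rw [pow_zero, mul_one]
  have hmμ : ∀ s, |m s - abar0| ≤ μn := by
    intro s
    have hkey : (m s - abar0) * E 0 s = ∑ i, (w i * exp (a i * s)) * (a i - abar0) := by
      have h1 : m s * E 0 s = E 1 s := by rw [hm]; exact div_mul_cancel₀ _ (hne s)
      rw [sub_mul, h1, hE0sum s, hE, Finset.mul_sum, ← Finset.sum_sub_distrib]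
      exact Finset.sum_congr rfl fun i _ => by rw [pow_one]; ring
    have habs : |∑ i, (w i * exp (a i * s)) * (a i - abar0)| ≤ μn * E 0 s := by
      calc |∑ i, (w i * exp (a i * s)) * (a i - abar0)|
          ≤ ∑ i, |(w i * exp (a i * s)) * (a i - abar0)| := Finset.abs_sum_le_sum_abs _ _
        _ ≤ ∑ i, (w i * exp (a i * s)) * μn := by
            refine Finset.sum_le_sum fun i _ => ?_
            rw [abs_mul, abs_of_nonneg (hwe i s)]
            exact mul_le_mul_of_nonneg_left (hμ_ub i) (hwe i s)
        _ = μn * E 0 s := by rw [← Finset.sum_mul, mul_comm, hE0sum s]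
    have h2 : |m s - abar0| * E 0 s ≤ μn * E 0 s := by
      rw [← abs_of_pos (hE0pos s), ← abs_mul, hkey, abs_of_pos (hE0pos s)]
      exact habs
    exact le_of_mul_le_mul_right h2 (hE0pos s)
  have ham : ∀ (i : Fin n) (s : ℝ), |a i - m s| ≤ 2 * μn := by
    intro i s
    have h1 := abs_sub_le (a i) abar0 (m s)
    rw [abs_sub_comm abar0 (m s)] at h1
    have := hμ_ub i
    have := hmμ s
    linarith
  have hg3bound : ∀ s, |g3f s| ≤ 8 * μn ^ 3 := by
    intro s
    have hE1m : E 1 s = m s * E 0 s := by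
      rw [hm]; exact (div_mul_cancel₀ _ (hne s)).symm
    have hsum3 : ∑ i, (w i * exp (a i * s)) * (a i - m s) ^ 3
        = E 3 s - 3 * m s * E 2 s + 3 * m s ^ 2 * E 1 s - m s ^ 3 * E 0 s := by
      rw [hE]
      simp only [Finset.mul_sum, ← Finset.sum_sub_distrib, ← Finset.sum_add_distrib]
      exact Finset.sum_congr rfl fun i _ => by ring
    have hg3eq : g3f s * E 0 s = ∑ i, (w i * exp (a i * s)) * (a i - m s) ^ 3 := by
      rw [hsum3, hE1m, hg3f]
      field_simp [hne s]
      ring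
    have habs : |g3f s| * E 0 s ≤ 8 * μn ^ 3 * E 0 s := by
      calc |g3f s| * E 0 s = |g3f s * E 0 s| := by
            rw [abs_mul, abs_of_pos (hE0pos s)]
        _ = |∑ i, (w i * exp (a i * s)) * (a i - m s) ^ 3| := by rw [hg3eq]
        _ ≤ ∑ i, (w i * exp (a i * s)) * (2 * μn) ^ 3 := by
            refine (Finset.abs_sum_le_sum_abs _ _).trans (Finset.sum_le_sum fun i _ => ?_)
            rw [abs_mul, abs_of_nonneg (hwe i s), abs_pow]
            exact mul_le_mul_of_nonneg_left
              (pow_le_pow_left₀ (abs_nonneg _) (ham i s) 3) (hwe i s)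
        _ = (2 * μn) ^ 3 * E 0 s := by rw [← Finset.sum_mul, mul_comm, hE0sum s]
        _ = 8 * μn ^ 3 * E 0 s := by ring
    exact le_of_mul_le_mul_right habs (hE0pos s)
  have main := third_order_bound gf g1f g2f g3f hgd hg1d hg2d hg00 hg10 hg20
    (8 * μn ^ 3) hg3bound t
  have hfin : (4:ℝ)/3 * μn ^ 3 * |t| ^ 3 = 8 * μn ^ 3 * |t| ^ 3 / 6 := by ring
  calc |K t - K 0 - abar0 * t - (1/2) * K2 * t ^ 2| = |gf t| := by rw [hgf]
    _ ≤ 8 * μn ^ 3 * |t| ^ 3 / 6 := main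
    _ = (4/3) * μn ^ 3 * |t| ^ 3 := hfin.symm
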